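/- Define f_N = x_1^{-⌊(N+1)/2⌋} x_2^{-⌊N/2⌋} F(w_1,...,w_N) with the substitution w_k = x_{[k+1]}^2, where [k] ∈ {1,2} is congruent to k mod 2. Then for N ≥ 2, the identity x_{[N]} f_N = f_{N-1} + x_{[N-1]} f_{N-2} holds. -/

import Mathlib

noncomputable abbrev K : Type := FractionRing (MvPolynomial (Fin 2) ℚ)

noncomputable def X1 : K := algebraMap (MvPolynomial (Fin 2) ℚ) K (MvPolynomial.X 0)

noncomputable def X2 : K := algebraMap (MvPolynomial (Fin 2) ℚ) K (MvPolynomial.X 1)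


/-- Fibonacci polynomial: sum over totally disconnected subsets of {1,...,N}. -/
def fibPoly {R : Type*} [CommRing R] (w : ℕ → R) (N : ℕ) : R :=
  ∑ D ∈ (Finset.Icc 1 N).powerset.filter (fun D => ∀ k ∈ D, k + 1 ∉ D), ∏ k ∈ D, w k


noncomputable def fN (N : ℕ) : K :=
  X1⁻¹ ^ ((N + 1) / 2) * X2⁻¹ ^ (N / 2) *
    fibPoly (fun k => (if k % 2 = 1 then X2 else X1) ^ 2) N

lemma fibPoly_rec {R : Type*} [CommRing R] (w : ℕ → R) (N : ℕ) (hN : 2 ≤ N) :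
    fibPoly w N = fibPoly w (N-1) + w N * fibPoly w (N-2) := by
  classical
  unfold fibPoly
  rw [← Finset.sum_filter_add_sum_filter_not
      ((Finset.Icc 1 N).powerset.filter (fun D => ∀ k ∈ D, k + 1 ∉ D)) (fun D => N ∈ D),
    add_comm]
  congr 1
  · apply Finset.sum_congr _ (fun _ _ => rfl)
    ext D
    simp only [Finset.mem_filter, Finset.mem_powerset, Finset.subset_iff, Finset.mem_Icc]
    constructor
    · rintro ⟨⟨hsub, hcond⟩, hN'⟩
      refine ⟨fun k hk => ?_, hcond⟩
      have h1 := hsub hk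
      have h2 : k ≠ N := fun h => hN' (h ▸ hk)
      omega
    · rintro ⟨hsub, hcond⟩
      refine ⟨⟨fun k hk => by have := hsub hk; omega, hcond⟩, fun hmem => ?_⟩
      have := hsub hmem; omega
  · rw [Finset.mul_sum]
    apply Finset.sum_nbij' (fun D => D.erase N) (fun D => insert N D)
    · intro D hD
      simp only [Finset.mem_filter, Finset.mem_powerset, Finset.subset_iff,
        Finset.mem_Icc] at hD ⊢
      obtain ⟨⟨hsub, hcond⟩, hNmem⟩ := hD
      constructor
      · intro k hk
        rw [Finset.mem_erase] at hk
        obtain ⟨hkN, hkD⟩ := hk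
        have h1 := hsub hkD
        have h2 : k ≠ N - 1 := by
          intro h
          have hNN : N - 1 + 1 = N := by omega
          exact hcond k hkD (by rw [h, hNN]; exact hNmem)
        omega
      · intro k hk hmem
        rw [Finset.mem_erase] at hk hmem
        exact hcond k hk.2 hmem.2
    · intro D hD
      simp only [Finset.mem_filter, Finset.mem_powerset, Finset.subset_iff,
        Finset.mem_Icc] at hD ⊢
      obtain ⟨hsub, hcond⟩ := hD
      refine ⟨⟨fun k hk => ?_, fun k hk hmem => ?_⟩, Finset.mem_insert_self _ _⟩
      · rcases Finset.mem_insert.mp hk with h | h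
        · omega
        · have := hsub h; omega
      · rcases Finset.mem_insert.mp hk with h | h
        · rcases Finset.mem_insert.mp hmem with h' | h'
          · omega
          · have := hsub h'; omega
        · rcases Finset.mem_insert.mp hmem with h' | h'
          · have := hsub h; omega
          · exact hcond k h h'
    · intro D hD
      simp only [Finset.mem_filter, Finset.mem_powerset] at hD
      exact Finset.insert_erase hD.2
    · intro D hD
      simp only [Finset.mem_filter, Finset.mem_powerset, Finset.subset_iff,
        Finset.mem_Icc] at hD
      refine Finset.erase_insert (fun hmem => ?_)
      have := hD.1 hmem; omega
    · intro D hD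
      simp only [Finset.mem_filter, Finset.mem_powerset] at hD
      rw [← Finset.prod_erase_mul D w hD.2, mul_comm]

lemma X1_ne : X1 ≠ 0 :=
  (map_ne_zero_iff _ (IsFractionRing.injective (MvPolynomial (Fin 2) ℚ) K)).mpr
    (MvPolynomial.X_ne_zero 0)

lemma X2_ne : X2 ≠ 0 :=
  (map_ne_zero_iff _ (IsFractionRing.injective (MvPolynomial (Fin 2) ℚ) K)).mpr
    (MvPolynomial.X_ne_zero 1)

theorem fN_recursion (N : ℕ) (hN : 2 ≤ N) :
    (if N % 2 = 1 then X1 else X2) * fN N =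
      fN (N - 1) + (if (N - 1) % 2 = 1 then X1 else X2) * fN (N - 2) := by
  have h1 := X1_ne
  have h2 := X2_ne
  rcases Nat.even_or_odd N with h | h
  · obtain ⟨p, rfl⟩ : ∃ p, N = 2 * p + 2 := by
      obtain ⟨m, hm⟩ := h; exact ⟨m - 1, by omega⟩
    have hrec := fibPoly_rec (fun k => (if k % 2 = 1 then X2 else X1) ^ 2) (2 * p + 2)
      (by omega)
    simp only [show 2 * p + 2 - 1 = 2 * p + 1 from by omega,
      show 2 * p + 2 - 2 = 2 * p from by omega] at hrec ⊢
    unfold fN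
    rw [hrec]
    simp only [show (2 * p + 2 + 1) / 2 = p + 1 from by omega,
      show (2 * p + 2) / 2 = p + 1 from by omega,
      show (2 * p + 1 + 1) / 2 = p + 1 from by omega,
      show (2 * p + 1) / 2 = p from by omega,
      show (2 * p) / 2 = p from by omega,
      show (2 * p + 2) % 2 = 0 from by omega,
      show (2 * p + 1) % 2 = 1 from by omega,
      if_pos rfl, if_neg (by omega : ¬ ((0 : ℕ) = 1)), ↓reduceIte]
    linear_combination (X1 * (X1⁻¹ ^ p * X2⁻¹ ^ p) * fibPoly (fun k => (if k % 2 = 1 then X2 else X1) ^ 2) (2 * p) * (X1 * X1⁻¹) + X1⁻¹ * (X1⁻¹ ^ p * X2⁻¹ ^ p) * fibPoly (fun k => (if k % 2 = 1 then X2 else X1) ^ 2) (2 * p + 1)) * mul_inv_cancel₀ h2 + X1 * (X1⁻¹ ^ p * X2⁻¹ ^ p) * fibPoly (fun k => (if k % 2 = 1 then X2 else X1) ^ 2) (2 * p) * mul_inv_cancel₀ h1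
  · obtain ⟨p, rfl⟩ : ∃ p, N = 2 * p + 3 := by
      obtain ⟨m, hm⟩ := h; exact ⟨m - 1, by omega⟩
    have hrec := fibPoly_rec (fun k => (if k % 2 = 1 then X2 else X1) ^ 2) (2 * p + 3)
      (by omega)
    simp only [show 2 * p + 3 - 1 = 2 * p + 2 from by omega,
      show 2 * p + 3 - 2 = 2 * p + 1 from by omega] at hrec ⊢
    unfold fN
    rw [hrec]
    simp only [show (2 * p + 3 + 1) / 2 = p + 2 from by omega,
      show (2 * p + 3) / 2 = p + 1 from by omega,
      show (2 * p + 2 + 1) / 2 = p + 1 from by omega,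
      show (2 * p + 2) / 2 = p + 1 from by omega,
      show (2 * p + 1 + 1) / 2 = p + 1 from by omega,
      show (2 * p + 1) / 2 = p from by omega,
      show (2 * p + 3) % 2 = 1 from by omega,
      show (2 * p + 2) % 2 = 0 from by omega,
      if_pos rfl, if_neg (by omega : ¬ ((0 : ℕ) = 1)), ↓reduceIte]
    linear_combination (X1⁻¹ * (X1⁻¹ ^ p * X2⁻¹ ^ p) * X2 * fibPoly (fun k => (if k % 2 = 1 then X2 else X1) ^ 2) (2 * p + 1) * (X1 * X1⁻¹)) * mul_inv_cancel₀ h2 + (X1⁻¹ * (X1⁻¹ ^ p * X2⁻¹ ^ p) * X2 * fibPoly (fun k => (if k % 2 = 1 then X2 else X1) ^ 2) (2 * p + 1) + X1⁻¹ * (X1⁻¹ ^ p * X2⁻¹ ^ p) * X2⁻¹ * fibPoly (fun k => (if k % 2 = 1 then X2 else X1) ^ 2) (2 * p + 2)) * mul_inv_cancel₀ h1
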